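/- The 9×9 Hessian matrix of the quadratic form f(B) = μ·(Σ_{j=1}^3 (b_{j1}² + b_{j2}²)) + δ·(Σ_{j=1}^3 b_{j3}²) + (μ+λ)·(b_{11}+b_{22}+b_{33})² (with respect to the nine entries b_{lm}) has eigenvalues 2μ (with multiplicity 5), 2δ (with multiplicity 2), and 4μ+δ+3λ ± √(12μ²+δ²+9λ²−4μδ+20μλ−2λδ) (each with multiplicity 1). -/

import Mathlib

set_option maxHeartbeats 4000000

open Polynomial

def hessianIdx : (Fin 3 × Fin 3) ≃ (Fin 3 ⊕ Fin 6) where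
  toFun p := ![![Sum.inl 0, Sum.inr 0, Sum.inr 4],
               ![Sum.inr 1, Sum.inl 1, Sum.inr 5],
               ![Sum.inr 2, Sum.inr 3, Sum.inl 2]] p.1 p.2
  invFun s := Sum.elim ![(0,0),(1,1),(2,2)] ![(0,1),(1,0),(2,0),(2,1),(0,2),(1,2)] s
  left_inv := by decide
  right_inv := by decide

lemma charpoly_diag6 (d : Fin 6 → ℝ) :
    (Matrix.diagonal d).charpoly = ∏ i, (X - C (d i)) := by
  have : Matrix.charmatrix (Matrix.diagonal d)
      = Matrix.diagonal fun i => (X : ℝ[X]) - C (d i) := by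
    ext i j
    by_cases h : i = j
    · subst h; simp [Matrix.charmatrix_apply_eq]
    · simp [Matrix.charmatrix_apply_ne _ _ _ h, Matrix.diagonal_apply_ne _ h]
  rw [Matrix.charpoly, this, Matrix.det_diagonal]

theorem hessian_eigenvalues (μ δ lam : ℝ)
    (f : Matrix (Fin 3) (Fin 3) ℝ → ℝ)
    (hf : ∀ B : Matrix (Fin 3) (Fin 3) ℝ,
      f B = μ * (∑ j, ((B j 0) ^ 2 + (B j 1) ^ 2)) + δ * (∑ j, (B j 2) ^ 2)
          + (μ + lam) * (B 0 0 + B 1 1 + B 2 2) ^ 2)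
    (H : Matrix (Fin 3 × Fin 3) (Fin 3 × Fin 3) ℝ)
    (hH : ∀ p q : Fin 3 × Fin 3,
      H p q = f (Matrix.single p.1 p.2 1 + Matrix.single q.1 q.2 1)
        - f (Matrix.single p.1 p.2 1) - f (Matrix.single q.1 q.2 1)) :
    H.charpoly =
      (X - C (2 * μ)) ^ 5 * (X - C (2 * δ)) ^ 2
        * (X - C (4 * μ + δ + 3 * lam +
            Real.sqrt (12 * μ ^ 2 + δ ^ 2 + 9 * lam ^ 2 - 4 * μ * δ + 20 * μ * lam - 2 * lam * δ)))
        * (X - C (4 * μ + δ + 3 * lam -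
            Real.sqrt (12 * μ ^ 2 + δ ^ 2 + 9 * lam ^ 2 - 4 * μ * δ + 20 * μ * lam - 2 * lam * δ))) := by
  have hΔ : (0:ℝ) ≤ 12 * μ ^ 2 + δ ^ 2 + 9 * lam ^ 2 - 4 * μ * δ + 20 * μ * lam - 2 * lam * δ := by
    nlinarith [sq_nonneg (2*μ+lam-δ), sq_nonneg (μ+lam)]
  have key : Matrix.reindex hessianIdx hessianIdx H =
      Matrix.fromBlocks
        (Matrix.of fun i j : Fin 3 =>
          (if i = j then (if i = 2 then 2*δ else 2*μ) else 0) + 2*(μ+lam))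
        0 0
        (Matrix.diagonal (fun i : Fin 6 => if i.val < 4 then 2*μ else 2*δ)) := by
    ext i j
    rcases i with i | i <;> rcases j with j | j <;> fin_cases i <;> fin_cases j <;>
      simp (config := { decide := true }) [hessianIdx, hH, hf, Matrix.single,
        Fin.sum_univ_three, Matrix.diagonal] <;> ring
  have h1 : H.charpoly = (Matrix.reindex hessianIdx hessianIdx H).charpoly :=
    (Matrix.charpoly_reindex _ _).symm
  rw [h1, key, Matrix.charpoly_fromBlocks_zero₁₂, charpoly_diag6, Matrix.charpoly,
    Matrix.det_fin_three]
  have hC : (C (Real.sqrt (12 * μ ^ 2 + δ ^ 2 + 9 * lam ^ 2 - 4 * μ * δ + 20 * μ * lam - 2 * lam * δ)))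
      * (C (Real.sqrt (12 * μ ^ 2 + δ ^ 2 + 9 * lam ^ 2 - 4 * μ * δ + 20 * μ * lam - 2 * lam * δ)))
      = C (12 * μ ^ 2 + δ ^ 2 + 9 * lam ^ 2 - 4 * μ * δ + 20 * μ * lam - 2 * lam * δ) := by
    rw [← _root_.map_mul, ← sq, Real.sq_sqrt hΔ]
  simp only [_root_.map_mul, _root_.map_add, map_sub, map_pow, map_ofNat] at hC ⊢
  simp (config := { decide := true }) only [Fin.prod_univ_six, Matrix.charmatrix_apply,
    Matrix.diagonal_apply, Matrix.one_apply, Matrix.of_apply, Fin.isValue,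
    if_true, if_false, _root_.map_mul, _root_.map_add, map_sub, map_pow, map_ofNat, map_zero, map_one]
  linear_combination ((X - 2 * C μ)^5 * (X - 2 * C δ)^2) * hC
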